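/- Let 0 < q < 1 and let A(ω) = a₁ω + a₀, B(ω) = b₂ω² + b₁ω + b₀ be complex polynomials with b₀ ≠ 0, b₂ ≠ 0, b₁ − (1−q)a₀ = 0 and b₂ − (1−q)a₁ = 0 (so that B(ω) − (1−q)ω·A(ω) = b₀ is constant). Write B(ω) = b₂(ω−a)(ω−b) with roots a, b ≠ 0. Then ϱ(ω) := (qω/a; q)_∞ · (qω/b; q)_∞ satisfies ϱ(ω)·(B(ω) − (1−q)ω·A(ω)) = B(qω)·ϱ(qω) for all ω ∈ ℂ. -/

import Mathlib

/-- The infinite q-Pochhammer symbol `(x; q)_∞ = ∏_{k=0}^∞ (1 − qᵏx)` over `ℂ`. -/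
noncomputable def qPoch (q : ℝ) (x : ℂ) : ℂ :=
  ∏' k : ℕ, (1 - (q : ℂ) ^ k * x)

lemma multipliable_qpoch (q : ℝ) (hq0 : 0 < q) (hq1 : q < 1) (x : ℂ) :
    Multipliable (fun k : ℕ => 1 - (q : ℂ) ^ k * x) := by
  by_cases hz : ∃ K : ℕ, 1 - (q : ℂ) ^ K * x = 0
  · obtain ⟨K, hK⟩ := hz
    refine ⟨0, ?_⟩
    have : ∀ᶠ s : Finset ℕ in Filter.atTop,
        (∏ k ∈ s, (1 - (q : ℂ) ^ k * x)) = 0 := by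
      filter_upwards [Filter.eventually_ge_atTop ({K} : Finset ℕ)] with s hs
      exact Finset.prod_eq_zero (hs (Finset.mem_singleton_self K)) hK
    exact Filter.Tendsto.congr' (this.mono fun s h => h.symm) tendsto_const_nhds
  · push_neg at hz
    have := (fun h : Unit → Summable (fun k : ℕ => Complex.log (1 - (q : ℂ) ^ k * x)) =>
      Complex.multipliable_of_summable_log (h ())) ?_
    · exact this
    intro _
    have hsum : Summable (fun k : ℕ => (3/2 : ℝ) * (q ^ k * ‖x‖)) := by
      apply Summable.mul_left
      exact (summable_geometric_of_lt_one hq0.le hq1).mul_right _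
    apply Summable.of_norm_bounded_eventually_nat hsum
    have hlim : Filter.Tendsto (fun k : ℕ => q ^ k * ‖x‖) Filter.atTop (nhds 0) := by
      simpa using (tendsto_pow_atTop_nhds_zero_of_lt_one hq0.le hq1).mul_const ‖x‖
    have hev : ∀ᶠ k : ℕ in Filter.atTop, q ^ k * ‖x‖ ≤ 1/2 := by
      filter_upwards [hlim.eventually_le_const (by norm_num : (0:ℝ) < 1/2)] with k hk
      exact hk
    filter_upwards [hev] with k hk
    have h1 : (1 : ℂ) - (q : ℂ) ^ k * x = 1 + (-((q : ℂ) ^ k * x)) := by ring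
    rw [h1]
    have hqn : ‖((q : ℂ)) ^ k‖ = q ^ k := by
      rw [norm_pow, Complex.norm_real, Real.norm_of_nonneg hq0.le]
    have hn : ‖-((q : ℂ) ^ k * x)‖ ≤ 1/2 := by
      rw [norm_neg, norm_mul, hqn]; exact hk
    calc ‖Complex.log (1 + (-((q : ℂ) ^ k * x)))‖
        ≤ (3/2) * ‖-((q : ℂ) ^ k * x)‖ := Complex.norm_log_one_add_half_le_self hn
      _ = (3/2) * (q ^ k * ‖x‖) := by
          rw [norm_neg, norm_mul, hqn]

lemma qPoch_step (q : ℝ) (hq0 : 0 < q) (hq1 : q < 1) (x : ℂ) :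
    qPoch q x = (1 - x) * qPoch q ((q : ℂ) * x) := by
  have hshift : Multipliable (fun n : ℕ => 1 - (q : ℂ) ^ (n + 1) * x) := by
    refine (multipliable_qpoch q hq0 hq1 ((q : ℂ) * x)).congr fun k => ?_
    rw [pow_succ]; ring
  have h := tprod_eq_zero_mul' (f := fun k : ℕ => 1 - (q : ℂ) ^ k * x) hshift
  simp only [pow_zero, one_mul] at h
  unfold qPoch
  rw [h]
  congr 1
  exact tprod_congr fun k => by rw [pow_succ]; ring

/-- Let `0 < q < 1` and `A(ω) = a₁ω + a₀`, `B(ω) = b₂ω² + b₁ω + b₀` be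
complex polynomials with `b₀ ≠ 0`, `b₂ ≠ 0`, `b₁ − (1−q)a₀ = 0` and `b₂ − (1−q)a₁ = 0`
(so that `B(ω) − (1−q)ωA(ω) = b₀` is constant).  Write `B(ω) = b₂(ω−a)(ω−b)` with roots
`a, b ≠ 0`.  Then `ϱ(ω) = (qω/a;q)_∞(qω/b;q)_∞` satisfies
`ϱ(ω)(B(ω) − (1−q)ωA(ω)) = B(qω)ϱ(qω)` for all `ω ∈ ℂ`. -/
theorem stmt_8 (q : ℝ) (hq0 : 0 < q) (hq1 : q < 1)
    (a₀ a₁ b₀ b₁ b₂ a b : ℂ)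
    (A B : ℂ → ℂ)
    (hA : ∀ ω : ℂ, A ω = a₁ * ω + a₀)
    (hB : ∀ ω : ℂ, B ω = b₂ * ω ^ 2 + b₁ * ω + b₀)
    (hb₀ : b₀ ≠ 0) (hb₂ : b₂ ≠ 0)
    (hlin : b₁ - (1 - (q : ℂ)) * a₀ = 0) (hlead : b₂ - (1 - (q : ℂ)) * a₁ = 0)
    (ha : a ≠ 0) (hb : b ≠ 0)
    (hBroots : ∀ ω : ℂ, B ω = b₂ * (ω - a) * (ω - b))
    (ϱ : ℂ → ℂ)
    (hϱ : ∀ ω : ℂ, ϱ ω = qPoch q ((q : ℂ) * ω / a) * qPoch q ((q : ℂ) * ω / b)) :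
    ∀ ω : ℂ, ϱ ω * (B ω - (1 - (q : ℂ)) * ω * A ω) = B ((q : ℂ) * ω) * ϱ ((q : ℂ) * ω) := by
  intro ω
  have hconst : B ω - (1 - (q : ℂ)) * ω * A ω = b₀ := by
    rw [hB, hA]
    have h1 : b₁ = (1 - (q : ℂ)) * a₀ := by linear_combination hlin
    have h2 : b₂ = (1 - (q : ℂ)) * a₁ := by linear_combination hlead
    rw [h1, h2]; ring
  have hb₀ab : b₀ = b₂ * a * b := by
    have := (hB 0).symm.trans (hBroots 0)
    simpa using this
  have hstep : ϱ ω = (1 - (q : ℂ) * ω / a) * (1 - (q : ℂ) * ω / b) * ϱ ((q : ℂ) * ω) := by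
    rw [hϱ, hϱ]
    rw [qPoch_step q hq0 hq1 ((q : ℂ) * ω / a), qPoch_step q hq0 hq1 ((q : ℂ) * ω / b)]
    have e1 : (q : ℂ) * ((q : ℂ) * ω / a) = (q : ℂ) * ((q : ℂ) * ω) / a := by ring
    have e2 : (q : ℂ) * ((q : ℂ) * ω / b) = (q : ℂ) * ((q : ℂ) * ω) / b := by ring
    rw [e1, e2]; ring
  rw [hconst, hstep, hBroots, hb₀ab]
  field_simp
  ring
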